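/- Let {H₁, …, Hₙ} be an almost malnormal collection of subgroups of a finitely generated group G and B ≥ 0. Then for all g₁, g₂ ∈ G, if g₁H_i ≠ g₂H_j (as cosets), the diameter of N_B(g₁H_i) ∩ N_B(g₂H_j) in the word metric is finite. -/

import Mathlib

/-- The word metric on a group `G` with respect to a generating set `S`. -/
noncomputable def wordDist {G : Type*} [Group G] (S : Set G) (g h : G) : ℝ :=
  sInf { r : ℝ | ∃ w : List G, (∀ x ∈ w, x ∈ S ∨ x⁻¹ ∈ S) ∧ w.prod = g⁻¹ * h ∧
    (w.length : ℝ) = r }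

/-- The `B`-neighborhood of a subset of `G` in the word metric. -/
def wordNbhd {G : Type*} [Group G] (S : Set G) (B : ℝ) (A : Set G) : Set G :=
  { x : G | ∃ a ∈ A, wordDist S x a ≤ B }

section Aux

variable {G : Type*} [Group G]

/-- The word length of `g` (natural-number valued). -/
noncomputable def wlen (S : Set G) (g : G) : ℕ :=
  sInf {n : ℕ | ∃ w : List G, (∀ x ∈ w, x ∈ S ∨ x⁻¹ ∈ S) ∧ w.prod = g ∧ w.length = n}

theorem exists_word {S : Set G} (hSgen : Subgroup.closure S = ⊤) (g : G) :
    ∃ w : List G, (∀ x ∈ w, x ∈ S ∨ x⁻¹ ∈ S) ∧ w.prod = g := by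
  have hg : g ∈ Subgroup.closure S := by rw [hSgen]; trivial
  induction hg using Subgroup.closure_induction with
  | mem x hx => exact ⟨[x], by simp [hx], by simp⟩
  | one => exact ⟨[], by simp, by simp⟩
  | mul x y _ _ ihx ihy =>
      obtain ⟨w1, h1, p1⟩ := ihx; obtain ⟨w2, h2, p2⟩ := ihy
      refine ⟨w1 ++ w2, ?_, by simp [p1, p2]⟩
      intro z hz; rcases List.mem_append.1 hz with h | h
      exacts [h1 z h, h2 z h]
  | inv x _ ihx =>
      obtain ⟨w, hw, pw⟩ := ihx
      refine ⟨(w.map fun x => x⁻¹).reverse, ?_, ?_⟩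
      · intro z hz
        simp only [List.mem_reverse, List.mem_map] at hz
        obtain ⟨y, hy, rfl⟩ := hz
        rcases hw y hy with h | h
        · exact Or.inr (by simpa using h)
        · exact Or.inl h
      · rw [← List.prod_inv_reverse, pw]

theorem wlen_spec {S : Set G} (hSgen : Subgroup.closure S = ⊤) (g : G) :
    ∃ w : List G, (∀ x ∈ w, x ∈ S ∨ x⁻¹ ∈ S) ∧ w.prod = g ∧ w.length = wlen S g := by
  have hne : {n : ℕ | ∃ w : List G, (∀ x ∈ w, x ∈ S ∨ x⁻¹ ∈ S) ∧ w.prod = g ∧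
      w.length = n}.Nonempty := by
    obtain ⟨w, hw, pw⟩ := exists_word hSgen g
    exact ⟨w.length, w, hw, pw, rfl⟩
  exact Nat.sInf_mem hne

theorem wlen_le {S : Set G} {g : G} {w : List G}
    (hw : ∀ x ∈ w, x ∈ S ∨ x⁻¹ ∈ S) (pw : w.prod = g) : wlen S g ≤ w.length :=
  Nat.sInf_le ⟨w, hw, pw, rfl⟩

theorem wlen_mul_le {S : Set G} (hSgen : Subgroup.closure S = ⊤) (g h : G) :
    wlen S (g * h) ≤ wlen S g + wlen S h := by
  obtain ⟨w1, h1, p1, l1⟩ := wlen_spec hSgen g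
  obtain ⟨w2, h2, p2, l2⟩ := wlen_spec hSgen h
  have : wlen S (g * h) ≤ (w1 ++ w2).length := by
    refine wlen_le ?_ (by simp [p1, p2])
    intro z hz; rcases List.mem_append.1 hz with hh | hh
    exacts [h1 z hh, h2 z hh]
  simpa [l1, l2] using this

theorem wlen_inv_le {S : Set G} (hSgen : Subgroup.closure S = ⊤) (g : G) :
    wlen S g⁻¹ ≤ wlen S g := by
  obtain ⟨w, hw, pw, lw⟩ := wlen_spec hSgen g
  have : wlen S g⁻¹ ≤ ((w.map fun x => x⁻¹).reverse).length := by
    refine wlen_le ?_ ?_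
    · intro z hz
      simp only [List.mem_reverse, List.mem_map] at hz
      obtain ⟨y, hy, rfl⟩ := hz
      rcases hw y hy with h | h
      · exact Or.inr (by simpa using h)
      · exact Or.inl h
    · rw [← List.prod_inv_reverse, pw]
  simpa [lw] using this

theorem wlen_inv {S : Set G} (hSgen : Subgroup.closure S = ⊤) (g : G) :
    wlen S g⁻¹ = wlen S g :=
  le_antisymm (wlen_inv_le hSgen g) (by simpa using wlen_inv_le hSgen g⁻¹)

theorem wordDist_eq_wlen {S : Set G} (hSgen : Subgroup.closure S = ⊤) (g h : G) :
    wordDist S g h = (wlen S (g⁻¹ * h) : ℝ) := by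
  have hset : { r : ℝ | ∃ w : List G, (∀ x ∈ w, x ∈ S ∨ x⁻¹ ∈ S) ∧ w.prod = g⁻¹ * h ∧
      (w.length : ℝ) = r } = (fun n : ℕ => (n : ℝ)) ''
      {n : ℕ | ∃ w : List G, (∀ x ∈ w, x ∈ S ∨ x⁻¹ ∈ S) ∧ w.prod = g⁻¹ * h ∧ w.length = n} := by
    ext r
    constructor
    · rintro ⟨w, hw, pw, rfl⟩; exact ⟨w.length, ⟨w, hw, pw, rfl⟩, rfl⟩
    · rintro ⟨m, ⟨w, hw, pw, hl⟩, rfl⟩; exact ⟨w, hw, pw, by exact_mod_cast congrArg _ hl⟩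
  have hne : {n : ℕ | ∃ w : List G, (∀ x ∈ w, x ∈ S ∨ x⁻¹ ∈ S) ∧ w.prod = g⁻¹ * h ∧
      w.length = n}.Nonempty := by
    obtain ⟨w, hw, pw⟩ := exists_word hSgen (g⁻¹ * h)
    exact ⟨w.length, w, hw, pw, rfl⟩
  rw [wordDist, hset]
  refine le_antisymm ?_ ?_
  · exact csInf_le ⟨0, by rintro r ⟨m, _, rfl⟩; positivity⟩ ⟨_, Nat.sInf_mem hne, rfl⟩
  · refine le_csInf (hne.image _) ?_
    rintro r ⟨m, hm, rfl⟩
    show (wlen S (g⁻¹ * h) : ℝ) ≤ (m : ℝ)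
    exact_mod_cast Nat.sInf_le hm

/-- Products of words of length at most `m`. -/
theorem finite_word_prods {S : Set G} (hSfin : S.Finite) (m : ℕ) :
    {g : G | ∃ w : List G, (∀ x ∈ w, x ∈ S ∨ x⁻¹ ∈ S) ∧ w.length ≤ m ∧ w.prod = g}.Finite := by
  induction m with
  | zero =>
      refine Set.Finite.subset (Set.finite_singleton 1) ?_
      rintro g ⟨w, _, hl, pw⟩
      simp only [Nat.le_zero, List.length_eq_zero_iff] at hl
      simp [hl] at pw
      simp [← pw]
  | succ m ih =>
      have hT : (S ∪ S⁻¹).Finite := hSfin.union hSfin.inv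
      refine Set.Finite.subset (Set.Finite.insert 1 (hT.image2 (fun a b => a * b) ih)) ?_
      rintro g ⟨w, hw, hl, pw⟩
      match w with
      | [] => simp at pw; simp [← pw]
      | t :: w' =>
          right
          refine ⟨t, ?_, w'.prod, ⟨w', fun x hx => hw x (List.mem_cons_of_mem t hx),
            by simpa using hl, rfl⟩, by simp [← pw]⟩
          rcases hw t List.mem_cons_self with h | h
          · exact Or.inl h
          · exact Or.inr h

theorem finite_ball {S : Set G} (hSfin : S.Finite) (hSgen : Subgroup.closure S = ⊤) (m : ℕ) :
    {g : G | wlen S g ≤ m}.Finite := by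
  refine Set.Finite.subset (finite_word_prods hSfin m) ?_
  intro g hg
  obtain ⟨w, hw, pw, lw⟩ := wlen_spec hSgen g
  exact ⟨w, hw, lw ▸ hg, pw⟩

end Aux

/-- If `{H i}` is an almost malnormal collection of subgroups of a finitely generated group
`G` and `B ≥ 0`, then for distinct cosets `g₁ • H i ≠ g₂ • H j` the intersection
`N_B(g₁ H i) ∩ N_B(g₂ H j)` has finite diameter in the word metric. -/
theorem malnormal_coset_neighborhoods_bounded {G : Type*} [Group G]
    (S : Set G) (hSfin : S.Finite) (hSgen : Subgroup.closure S = ⊤)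
    (n : ℕ) (H : Fin n → Subgroup G)
    (hmal : ∀ (g : G) (i j : Fin n),
      Set.Infinite ((H i : Set G) ∩ ((fun x => g * x * g⁻¹) '' (H j : Set G))) →
      i = j ∧ g ∈ H i)
    (B : ℝ) (hB : 0 ≤ B) :
    ∀ (g₁ g₂ : G) (i j : Fin n),
      (fun x => g₁ * x) '' (H i : Set G) ≠ (fun x => g₂ * x) '' (H j : Set G) →
      ∃ R : ℝ,
        ∀ x ∈ wordNbhd S B ((fun x => g₁ * x) '' (H i : Set G)) ∩
              wordNbhd S B ((fun x => g₂ * x) '' (H j : Set G)),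
        ∀ y ∈ wordNbhd S B ((fun x => g₁ * x) '' (H i : Set G)) ∩
              wordNbhd S B ((fun x => g₂ * x) '' (H j : Set G)),
          wordDist S x y ≤ R := by
  intro g₁ g₂ i j hne
  by_contra hcon
  push_neg at hcon
  set X : Set G := wordNbhd S B ((fun x => g₁ * x) '' (H i : Set G)) ∩
      wordNbhd S B ((fun x => g₂ * x) '' (H j : Set G)) with hXdef
  -- X is infinite
  have hXinf : X.Infinite := by
    intro hXfin
    obtain ⟨R, hR⟩ := (hXfin.image2 (wordDist S) hXfin).bddAbove
    obtain ⟨x, hx, y, hy, hxy⟩ := hcon R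
    exact absurd (hR (Set.mem_image2_of_mem hx hy)) (not_le.mpr hxy)
  clear hcon
  set m : ℕ := ⌈B⌉₊ with hm
  -- extract approximating coset elements
  have hXmem : ∀ x ∈ X, ∃ h ∈ H i, ∃ k ∈ H j,
      wlen S (x⁻¹ * (g₁ * h)) ≤ m ∧ wlen S (x⁻¹ * (g₂ * k)) ≤ m := by
    rintro x ⟨⟨a, ⟨h, hh, rfl⟩, hda⟩, ⟨b, ⟨k, hk, rfl⟩, hdb⟩⟩
    rw [wordDist_eq_wlen hSgen] at hda hdb
    refine ⟨h, hh, k, hk, ?_, ?_⟩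
    · exact_mod_cast hda.trans (Nat.le_ceil B)
    · exact_mod_cast hdb.trans (Nat.le_ceil B)
  haveI : Infinite X := hXinf.to_subtype
  choose h hh k hk hd1 hd2 using fun x : X => hXmem x x.2
  set g : G := g₁⁻¹ * g₂ with hg
  set c : X → G := fun x => (h x)⁻¹ * g * k x with hc
  -- c lands in a finite ball of radius 2m
  have hcball : ∀ x : X, wlen S (c x) ≤ 2 * m := by
    intro x
    have hceq : c x = (x.1⁻¹ * (g₁ * h x))⁻¹ * (x.1⁻¹ * (g₂ * k x)) := by
      simp [hc, hg, mul_assoc]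
    calc wlen S (c x) ≤ wlen S (x.1⁻¹ * (g₁ * h x))⁻¹ + wlen S (x.1⁻¹ * (g₂ * k x)) := by
          rw [hceq]; exact wlen_mul_le hSgen _ _
      _ ≤ m + m := by
          rw [wlen_inv hSgen]
          exact Nat.add_le_add (hd1 x) (hd2 x)
      _ = 2 * m := by ring
  -- fibers of the map x ↦ (h x, c x) are finite
  have hfiber : ∀ v : G × G, {x : X | (h x, c x) = v}.Finite := by
    intro v
    have hsub : {x : X | (h x, c x) = v} ⊆
        (fun x : X => x.1) ⁻¹' ((fun u => g₁ * v.1 * u⁻¹) ''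
          {u : G | wlen S u ≤ m}) := by
      rintro x hx
      simp only [Set.mem_setOf_eq, Prod.ext_iff] at hx
      refine ⟨x.1⁻¹ * (g₁ * h x), hd1 x, ?_⟩
      rw [hx.1]; group
    have himg : ((fun u => g₁ * v.1 * u⁻¹) '' {u : G | wlen S u ≤ m}).Finite :=
      (finite_ball hSfin hSgen m).image _
    exact (himg.preimage (Set.injOn_of_injective (fun a b => Subtype.ext))).subset hsub
  -- the range of x ↦ (h x, c x) is infinite
  have hrange : (Set.range fun x : X => (h x, c x)).Infinite := by
    intro hfin
    have : (Set.univ : Set X).Finite := by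
      have : (Set.univ : Set X) ⊆ ⋃ v ∈ Set.range (fun x : X => (h x, c x)),
          {x : X | (h x, c x) = v} := by
        intro x _
        exact Set.mem_biUnion (Set.mem_range_self x) rfl
      exact (hfin.biUnion fun v _ => hfiber v).subset this
    exact Set.infinite_univ this
  -- find c₀ attained for infinitely many values of h
  have hsnd : ((fun p : G × G => p.2) '' Set.range fun x : X => (h x, c x)).Finite := by
    refine (finite_ball hSfin hSgen (2 * m)).subset ?_
    rintro _ ⟨_, ⟨x, rfl⟩, rfl⟩
    exact hcball x
  obtain ⟨c₀, _, hc₀⟩ : ∃ c₀ ∈ (fun p : G × G => p.2) '' (Set.range fun x : X => (h x, c x)),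
      {p ∈ Set.range (fun x : X => (h x, c x)) | p.2 = c₀}.Infinite := by
    by_contra hcon2
    push_neg at hcon2
    have : (Set.range fun x : X => (h x, c x)) ⊆
        ⋃ c₀ ∈ (fun p : G × G => p.2) '' (Set.range fun x : X => (h x, c x)),
          {p ∈ Set.range (fun x : X => (h x, c x)) | p.2 = c₀} := by
      rintro p hp
      exact Set.mem_biUnion (Set.mem_image_of_mem _ hp) ⟨hp, rfl⟩
    exact hrange ((hsnd.biUnion fun c₀ hc₀ => hcon2 c₀ hc₀).subset this)
  -- the set of first coordinates is infinite
  set Y : Set G := (fun p : G × G => p.1) ''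
      {p ∈ Set.range (fun x : X => (h x, c x)) | p.2 = c₀} with hY
  have hYinf : Y.Infinite := by
    refine hc₀.image ?_
    rintro ⟨p1, p2⟩ ⟨_, hp2⟩ ⟨q1, q2⟩ ⟨_, hq2⟩ hpq
    simp only at hp2 hq2 hpq
    simp [hpq, hp2, hq2, Prod.ext_iff]
  have hYmem : ∀ v ∈ Y, v ∈ H i ∧ ∃ kk ∈ H j, v = g * kk * c₀⁻¹ := by
    rintro v ⟨⟨p1, p2⟩, ⟨⟨x, hx⟩, hp2⟩, rfl⟩
    simp only [Prod.ext_iff] at hx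
    simp only at hp2
    obtain ⟨hx1, hx2⟩ := hx
    refine ⟨hx1 ▸ hh x, k x, hk x, ?_⟩
    rw [← hp2, ← hx2, ← hx1, hc]
    group
  obtain ⟨v₀, hv₀⟩ := hYinf.nonempty
  obtain ⟨hv₀i, k₀, hk₀, hv₀eq⟩ := hYmem v₀ hv₀
  -- map Y into H i ∩ g (H j) g⁻¹
  have hIinf : Set.Infinite ((H i : Set G) ∩ ((fun x => g * x * g⁻¹) '' (H j : Set G))) := by
    refine ((hYinf.image (Set.injOn_of_injective (mul_left_injective v₀⁻¹))).mono ?_)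
    rintro _ ⟨v, hv, rfl⟩
    obtain ⟨hvi, kk, hkk, hveq⟩ := hYmem v hv
    refine ⟨mul_mem hvi (inv_mem hv₀i), kk * k₀⁻¹, mul_mem hkk (inv_mem hk₀), ?_⟩
    rw [hveq, hv₀eq]
    group
  obtain ⟨rfl, hgmem⟩ := hmal g i j hIinf
  -- conclude the cosets are equal, contradiction
  apply hne
  ext z
  constructor
  · rintro ⟨u, hu, rfl⟩
    exact ⟨g⁻¹ * u, mul_mem (inv_mem hgmem) hu, by simp [hg]; group⟩
  · rintro ⟨u, hu, rfl⟩
    exact ⟨g * u, mul_mem hgmem hu, by simp [hg]; group⟩
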